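/- Let a_1, …, a_n be positive integers with a_1 + ⋯ + a_n = 2A. Consider weighted 1-approval (plurality) spatial voting on ℝ with three candidates at positions 1, 2, 4, where c* is the candidate at 4, and n + 1 voters: for each i ∈ {1, …, n}, voter i has interval [1, 2] and weight a_i, and voter n+1 has interval [4, 5] and weight A. Then c* is a possible winner if and only if there is a subset S ⊆ {1, …, n} with Σ_{i∈S} a_i = A. -/

import Mathlib

/-- Candidate `i` is ranked above candidate `j` by a voter at position `T`:
either strictly closer, or tied in distance with the smaller index winning. -/
def prefers {m : ℕ} (c : Fin m → ℝ) (T : ℝ) (i j : Fin m) : Prop :=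
  |T - c i| < |T - c j| ∨ (|T - c i| = |T - c j| ∧ i < j)

noncomputable instance {m : ℕ} (c : Fin m → ℝ) (T : ℝ) (i j : Fin m) :
    Decidable (prefers c T i j) :=
  inferInstanceAs (Decidable (_ ∨ _))

/-- The set of indices of the `k` highest-ranked candidates for a voter at position `T`:
those with fewer than `k` candidates ranked above them. -/
noncomputable def topk {m : ℕ} (c : Fin m → ℝ) (T : ℝ) (k : ℕ) : Finset (Fin m) :=
  Finset.univ.filter fun i => (Finset.univ.filter fun j => prefers c T j i).card < k

/-- The weighted `k`-approval score of candidate `i`: the sum of the weights of the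
voters whose top-`k` set contains `i`. -/
noncomputable def score {m n : ℕ} (c : Fin m → ℝ) (k : ℕ) (w T : Fin n → ℝ)
    (i : Fin m) : ℝ :=
  ∑ j, if i ∈ topk c (T j) k then w j else 0

lemma mem_top1_iff (c : Fin 3 → ℝ) (T : ℝ) (i : Fin 3) :
    i ∈ topk c T 1 ↔ ∀ j, ¬ prefers c T j i := by
  simp [topk, Nat.lt_one_iff, Finset.card_eq_zero, Finset.filter_eq_empty_iff]

lemma vote0 {T : ℝ} (h1 : 1 ≤ T) (h2 : T ≤ 2) :
    ((0:Fin 3) ∈ topk ![1,2,4] T 1) ↔ T ≤ 3/2 := by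
  have e1 : |T - 1| = T - 1 := abs_of_nonneg (by linarith)
  have e2 : |T - 2| = 2 - T := by rw [abs_of_nonpos (by linarith)]; ring
  have e4 : |T - 4| = 4 - T := by rw [abs_of_nonpos (by linarith)]; ring
  rw [mem_top1_iff]
  simp only [Fin.forall_fin_succ, prefers, Matrix.cons_val_zero, Matrix.cons_val_succ,
    Matrix.cons_val_one, Matrix.head_cons, e1, e2, e4, IsEmpty.forall_iff, and_true]
  constructor
  · rintro ⟨-, h01, -⟩
    by_contra hgt
    push_neg at hgt
    exact h01 (Or.inl (by linarith))
  · intro hle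
    refine ⟨?_, ?_, ?_⟩ <;> rintro (h | ⟨he, hf⟩) <;>
      first | linarith | exact absurd hf (by decide)

lemma vote1 {T : ℝ} (h1 : 1 ≤ T) (h2 : T ≤ 2) :
    ((1:Fin 3) ∈ topk ![1,2,4] T 1) ↔ ¬ (T ≤ 3/2) := by
  have e1 : |T - 1| = T - 1 := abs_of_nonneg (by linarith)
  have e2 : |T - 2| = 2 - T := by rw [abs_of_nonpos (by linarith)]; ring
  have e4 : |T - 4| = 4 - T := by rw [abs_of_nonpos (by linarith)]; ring
  rw [mem_top1_iff]
  simp only [Fin.forall_fin_succ, prefers, Matrix.cons_val_zero, Matrix.cons_val_succ,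
    Matrix.cons_val_one, Matrix.head_cons, e1, e2, e4, IsEmpty.forall_iff, and_true]
  constructor
  · rintro ⟨h01, -, -⟩ hle
    rcases lt_or_eq_of_le (show T - 1 ≤ 2 - T by linarith) with hlt | heq
    · exact h01 (Or.inl hlt)
    · exact h01 (Or.inr ⟨heq, by decide⟩)
  · intro hgt
    push_neg at hgt
    refine ⟨?_, ?_, ?_⟩ <;> rintro (h | ⟨he, hf⟩) <;>
      first | linarith | exact absurd hf (by decide)

lemma vote2_left {T : ℝ} (h1 : 1 ≤ T) (h2 : T ≤ 2) :
    (2:Fin 3) ∉ topk ![1,2,4] T 1 := by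
  have e1 : |T - 1| = T - 1 := abs_of_nonneg (by linarith)
  have e4 : |T - 4| = 4 - T := by rw [abs_of_nonpos (by linarith)]; ring
  rw [mem_top1_iff]
  push_neg
  exact ⟨0, Or.inl (by simp only [Matrix.cons_val_zero,
    show ![(1:ℝ),2,4] 2 = 4 from rfl, e1, e4]; linarith)⟩

lemma vote_right {T : ℝ} (h1 : 4 ≤ T) (h2 : T ≤ 5) (i : Fin 3) :
    i ∈ topk ![1,2,4] T 1 ↔ i = 2 := by
  have e1 : |T - 1| = T - 1 := abs_of_nonneg (by linarith)
  have e2 : |T - 2| = T - 2 := abs_of_nonneg (by linarith)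
  have e4 : |T - 4| = T - 4 := abs_of_nonneg (by linarith)
  have h24 : prefers ![1,2,4] T 2 0 := Or.inl (by
    simp only [show ![(1:ℝ),2,4] 2 = 4 from rfl, Matrix.cons_val_zero, e1, e4]; linarith)
  have h24' : prefers ![1,2,4] T 2 1 := Or.inl (by
    simp only [show ![(1:ℝ),2,4] 2 = 4 from rfl, Matrix.cons_val_one, Matrix.head_cons,
      Matrix.cons_val_zero, e2, e4]; linarith)
  rw [mem_top1_iff]
  constructor
  · intro h
    fin_cases i
    · exact absurd h24 (h 2)
    · exact absurd h24' (h 2)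
    · rfl
  · rintro rfl
    simp only [Fin.forall_fin_succ, prefers, Matrix.cons_val_zero, Matrix.cons_val_succ,
      Matrix.cons_val_one, Matrix.head_cons, e1, e2, e4, IsEmpty.forall_iff, and_true,
      show ![(1:ℝ),2,4] 2 = 4 from rfl]
    refine ⟨?_, ?_, ?_⟩ <;> rintro (h | ⟨he, hf⟩) <;>
      first | linarith | exact absurd hf (by decide)

lemma scores_eq (n A : ℕ) (a : Fin n → ℕ) (T : Fin (n + 1) → ℝ)
    (hT : ∀ j : Fin (n + 1), T j ∈ Set.Icc
          (if (j : ℕ) < n then (1 : ℝ) else 4)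
          (if (j : ℕ) < n then (2 : ℝ) else 5)) :
    score ![(1 : ℝ), 2, 4] 1
        (fun j => if h : (j : ℕ) < n then (a ⟨j, h⟩ : ℝ) else (A : ℝ)) T 0
      = ∑ i ∈ Finset.univ.filter (fun i : Fin n => T i.castSucc ≤ 3/2), (a i : ℝ) ∧
    score ![(1 : ℝ), 2, 4] 1
        (fun j => if h : (j : ℕ) < n then (a ⟨j, h⟩ : ℝ) else (A : ℝ)) T 1
      = ∑ i ∈ Finset.univ.filter (fun i : Fin n => ¬ T i.castSucc ≤ 3/2), (a i : ℝ) ∧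
    score ![(1 : ℝ), 2, 4] 1
        (fun j => if h : (j : ℕ) < n then (a ⟨j, h⟩ : ℝ) else (A : ℝ)) T 2
      = (A : ℝ) := by
  have hTl : ∀ i : Fin n, 1 ≤ T i.castSucc ∧ T i.castSucc ≤ 2 := by
    intro i
    have := hT i.castSucc
    simp only [Fin.coe_castSucc, i.isLt, if_true, Set.mem_Icc] at this
    exact this
  have hTr : 4 ≤ T (Fin.last n) ∧ T (Fin.last n) ≤ 5 := by
    have := hT (Fin.last n)
    simp only [Fin.val_last, lt_irrefl, if_false, Set.mem_Icc] at this
    exact this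
  have hwc : ∀ i : Fin n,
      (if h : ((i.castSucc : Fin (n+1)) : ℕ) < n then (a ⟨(i.castSucc : Fin (n+1)), h⟩ : ℝ)
        else (A : ℝ)) = (a i : ℝ) := by
    intro i
    simp only [Fin.coe_castSucc, i.isLt, dif_pos, Fin.eta]
  have hwl : (if h : ((Fin.last n : Fin (n+1)) : ℕ) < n then
      (a ⟨(Fin.last n : Fin (n+1)), h⟩ : ℝ) else (A : ℝ)) = (A : ℝ) := by
    simp only [Fin.val_last, lt_irrefl, dif_neg, not_false_iff]
  refine ⟨?_, ?_, ?_⟩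
  · unfold score
    rw [Fin.sum_univ_castSucc, if_neg (by rw [vote_right hTr.1 hTr.2]; decide), add_zero,
      Finset.sum_filter]
    refine Finset.sum_congr rfl fun i _ => ?_
    simp only [hwc i]
    by_cases h : T i.castSucc ≤ 3/2
    · rw [if_pos ((vote0 (hTl i).1 (hTl i).2).mpr h), if_pos h]
    · rw [if_neg (fun hm => h ((vote0 (hTl i).1 (hTl i).2).mp hm)), if_neg h]
  · unfold score
    rw [Fin.sum_univ_castSucc, if_neg (by rw [vote_right hTr.1 hTr.2]; decide), add_zero,
      Finset.sum_filter]
    refine Finset.sum_congr rfl fun i _ => ?_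
    simp only [hwc i]
    by_cases h : T i.castSucc ≤ 3/2
    · rw [if_neg (fun hm => (vote1 (hTl i).1 (hTl i).2).mp hm h), if_neg (not_not_intro h)]
    · rw [if_pos ((vote1 (hTl i).1 (hTl i).2).mpr h), if_pos h]
  · unfold score
    rw [Fin.sum_univ_castSucc, if_pos ((vote_right hTr.1 hTr.2 2).mpr rfl)]
    simp only [hwl]
    rw [Finset.sum_eq_zero, zero_add]
    intro i _
    rw [if_neg (vote2_left (hTl i).1 (hTl i).2)]

/-- Correctness of the PARTITION reduction for weighted plurality (1-approval) in one
dimension: with candidates at `1, 2, 4`, voters `1, …, n` with intervals `[1, 2]` and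
weights `a i`, and one voter with interval `[4, 5]` and weight `A`, the candidate at
position `4` is a possible winner iff some subset of the `a i` sums to `A`. -/
theorem plurality_partition_reduction (n A : ℕ) (a : Fin n → ℕ)
    (hpos : ∀ i, 0 < a i) (hsum : ∑ i, a i = 2 * A) :
    (∃ T : Fin (n + 1) → ℝ,
        (∀ j : Fin (n + 1), T j ∈ Set.Icc
          (if (j : ℕ) < n then (1 : ℝ) else 4)
          (if (j : ℕ) < n then (2 : ℝ) else 5)) ∧
        ∀ i : Fin 3,
          score ![(1 : ℝ), 2, 4] 1
              (fun j => if h : (j : ℕ) < n then (a ⟨j, h⟩ : ℝ) else (A : ℝ)) T i ≤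
            score ![(1 : ℝ), 2, 4] 1
              (fun j => if h : (j : ℕ) < n then (a ⟨j, h⟩ : ℝ) else (A : ℝ)) T 2) ↔
      ∃ S : Finset (Fin n), ∑ i ∈ S, a i = A := by
  have htot : ∑ i : Fin n, (a i : ℝ) = 2 * A := by exact_mod_cast hsum
  constructor
  · rintro ⟨T, hT, hle⟩
    obtain ⟨h0, h1, h2⟩ := scores_eq n A a T hT
    refine ⟨Finset.univ.filter (fun i : Fin n => T i.castSucc ≤ 3/2), ?_⟩
    have hle0 := hle 0
    have hle1 := hle 1
    rw [h0, h2] at hle0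
    rw [h1, h2] at hle1
    have hsplit := Finset.sum_filter_add_sum_filter_not Finset.univ
      (fun i : Fin n => T i.castSucc ≤ 3/2) (fun i => (a i : ℝ))
    have : ∑ i ∈ Finset.univ.filter (fun i : Fin n => T i.castSucc ≤ 3/2), (a i : ℝ)
        = (A : ℝ) := by linarith
    exact_mod_cast this
  · rintro ⟨S, hS⟩
    refine ⟨fun j => if h : (j : ℕ) < n then (if (⟨j, h⟩ : Fin n) ∈ S then (1:ℝ) else 2)
      else 4, ?_, ?_⟩
    · intro j
      by_cases h : (j : ℕ) < n
      · simp only [h, if_true, dif_pos, Set.mem_Icc]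
        split_ifs <;> norm_num
      · simp only [h, if_false, dif_neg, not_false_iff, Set.mem_Icc]
        norm_num
    · intro i
      set T : Fin (n + 1) → ℝ := fun j => if h : (j : ℕ) < n
        then (if (⟨j, h⟩ : Fin n) ∈ S then (1:ℝ) else 2) else 4 with hTdef
      have hT : ∀ j : Fin (n + 1), T j ∈ Set.Icc
          (if (j : ℕ) < n then (1 : ℝ) else 4)
          (if (j : ℕ) < n then (2 : ℝ) else 5) := by
        intro j
        by_cases h : (j : ℕ) < n
        · simp only [hTdef, h, if_true, dif_pos, Set.mem_Icc]
          split_ifs <;> norm_num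
        · simp only [hTdef, h, if_false, dif_neg, not_false_iff, Set.mem_Icc]
          norm_num
      obtain ⟨h0, h1, h2⟩ := scores_eq n A a T hT
      have hTval : ∀ i : Fin n, T i.castSucc = if i ∈ S then (1:ℝ) else 2 := by
        intro i
        simp only [hTdef, Fin.coe_castSucc, i.isLt, dif_pos, Fin.eta]
      have hfilter : Finset.univ.filter (fun i : Fin n => T i.castSucc ≤ 3/2) = S := by
        ext i
        simp only [Finset.mem_filter, Finset.mem_univ, true_and, hTval i]
        split_ifs with h
        · simp only [h, iff_true]; norm_num
        · simp only [h, iff_false]; norm_num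
      have hS' : ∑ i ∈ S, (a i : ℝ) = (A : ℝ) := by exact_mod_cast hS
      have hsplit := Finset.sum_filter_add_sum_filter_not Finset.univ
        (fun i : Fin n => T i.castSucc ≤ 3/2) (fun i => (a i : ℝ))
      rw [hfilter] at hsplit h0
      have h1' : score ![(1 : ℝ), 2, 4] 1
          (fun j => if h : (j : ℕ) < n then (a ⟨j, h⟩ : ℝ) else (A : ℝ)) T 1 = (A : ℝ) := by
        rw [h1]; linarith
      have h0' : score ![(1 : ℝ), 2, 4] 1
          (fun j => if h : (j : ℕ) < n then (a ⟨j, h⟩ : ℝ) else (A : ℝ)) T 0 = (A : ℝ) := by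
        rw [h0]; exact hS'
      fin_cases i
      · exact le_of_eq (by rw [h2]; exact h0')
      · exact le_of_eq (by rw [h2]; exact h1')
      · exact le_refl _
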